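/- Suppose for each 0 ≤ i ≤ m we are given a statistic S_i : ⋃_{n≥0} PK(n) → ℕ and a constant c_i ∈ ℕ such that (i) S_i is equidistributed with luck, i.e. #{p ∈ PK(n) : S_i(p) = k} = C_{n,k} for all n ≥ 0 and k ≥ 0, and (ii) S_i(p) = S_i(P_{i+1}) + c_i for every n ≥ 1 and every p ∈ PK(n) with first-return decomposition (P_1, …, P_{m+1}). Then for every n ≥ 1, the identity Σ_{p ∈ PK(n)} ∏_{i=0}^{m} q_i^{S_i(p)} = (∏_{i=0}^{m} q_i^{c_i}) · Σ over all weak compositions (α_0, …, α_m) of n−1 of ∏_{i=0}^{m} R_{α_i}(q_i) holds in ℤ[q_0,…,q_m]. -/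

import Mathlib

open scoped Classical
open Finset

noncomputable section

/-- The set of positive nondecreasing sequences of length `n` bounded above by `b` is finite. -/
lemma boundedSeq_finite (n : ℕ) (b : ℕ → ℕ) :
    {p : Fin n → ℕ | Monotone p ∧ ∀ i : Fin n, 1 ≤ p i ∧ p i ≤ b i}.Finite := by
  have h : {p : Fin n → ℕ | Monotone p ∧ ∀ i : Fin n, 1 ≤ p i ∧ p i ≤ b i} ⊆
      Set.pi Set.univ (fun i : Fin n => Set.Iic (b i)) := by
    intro p hp
    rw [Set.mem_pi]
    intro i _
    exact (hp.2 i).2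
  exact (Set.Finite.pi fun i : Fin n => Set.finite_Iic (b (i : ℕ))).subset h

/-- The finset of nondecreasing sequences `p : Fin n → ℕ` of positive integers
with `p i ≤ b i` for all `i`. -/
def BSeq (n : ℕ) (b : ℕ → ℕ) : Finset (Fin n → ℕ) := (boundedSeq_finite n b).toFinset

/-- `PK m n` : the u-parking distributions of length `n`, i.e. nondecreasing sequences
of positive integers with `p i ≤ m*(i-1)+1` (here indexed from `0`, so `p i ≤ m*i+1`). -/
def PK (m n : ℕ) : Finset (Fin n → ℕ) := BSeq n (fun i => m * i + 1)

/-- `luck p` : the number of indices `i` with `p i = m*(i-1)+1` (0-indexed: `m*i+1`). -/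
def luck (m : ℕ) {n : ℕ} (p : Fin n → ℕ) : ℕ :=
  (Finset.univ.filter (fun i : Fin n => p i = m * (i : ℕ) + 1)).card

/-- `freq j p` = `ω_j(p)` : the number of indices `i` with `p i = j`. -/
def freq (j : ℕ) {n : ℕ} (p : Fin n → ℕ) : ℕ :=
  (Finset.univ.filter (fun i : Fin n => p i = j)).card

/-- `hcnt m n k r` = `h_{n,k,r}` : the number of nondecreasing sequences of positive
integers with `p_i ≤ m*(i+k-1) - r` for `1 ≤ i ≤ n` (0-indexed: `p i ≤ m*(i+k) - r`). -/
def hcnt (m n k r : ℕ) : ℕ := (BSeq n (fun i => m * (i + k) - r)).card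

/-- `Cnt m n k` = `C_{n,k}` : the number of `p ∈ PK m n` with `luck p = k`. -/
def Cnt (m n k : ℕ) : ℕ := ((PK m n).filter (fun p => luck m p = k)).card

/-- `Rpoly m n` = `R_n(q) = Σ_k C_{n,k} q^k ∈ ℤ[q]`. -/
def Rpoly (m n : ℕ) : Polynomial ℤ :=
  ∑ k ∈ Finset.range (n + 1), (Cnt m n k : Polynomial ℤ) * Polynomial.X ^ k

/-- `hfull t k` : the complete homogeneous symmetric polynomial of degree `k`
in variables `q_0, …, q_{t-1}`, i.e. the sum of all monomials of total degree `k`. -/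
def hfull (t k : ℕ) : MvPolynomial (Fin t) ℤ :=
  ∑ α ∈ Finset.Nat.antidiagonalTuple t k, ∏ i : Fin t, MvPolynomial.X i ^ α i

/-- `ffix m p ℓ` = `i_ℓ(p)` : the first fixed point of type `ℓ`, the smallest `k` with
`2 ≤ k ≤ n` and `p_k ≥ m*(k-2)+1+ℓ` (1-indexed), or `n+1` if there is none. -/
def ffix (m : ℕ) {n : ℕ} (p : Fin n → ℕ) (ℓ : ℕ) : ℕ :=
  sInf ({k | 2 ≤ k ∧ ∃ i : Fin n, (i : ℕ) + 1 = k ∧ m * (k - 2) + 1 + ℓ ≤ p i} ∪ {n + 1})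

/-- The extended first fixed points: `i_0 = 2`, `i_{m+1} = n+1`, and `i_ℓ = ffix m p ℓ`
for `1 ≤ ℓ ≤ m`. -/
def ffixE (m : ℕ) {n : ℕ} (p : Fin n → ℕ) (j : ℕ) : ℕ :=
  if j = 0 then 2 else if j = m + 1 then n + 1 else ffix m p j

/-- `pget p k` = `p_k` (1-indexed), `0` out of range. -/
def pget {n : ℕ} (p : Fin n → ℕ) (k : ℕ) : ℕ := if h : k - 1 < n then p ⟨k - 1, h⟩ else 0

/-- The `(ℓ+1)`-st part `P_{ℓ+1}` (for `0 ≤ ℓ ≤ m`) of the first-return decomposition of `p`: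
the list `(p_k - (p_{i_ℓ} - 1))` for `i_ℓ ≤ k ≤ i_{ℓ+1} - 1`. -/
def FRD (m : ℕ) {n : ℕ} (p : Fin n → ℕ) (ℓ : ℕ) : List ℕ :=
  (List.range (ffixE m p (ℓ + 1) - ffixE m p ℓ)).map
    (fun t => pget p (ffixE m p ℓ + t) - (pget p (ffixE m p ℓ) - 1))

/-- A list is a u-parking distribution: nondecreasing, with `l.get i ∈ [1, m*i+1]`
(0-indexed). -/
def isPKlist (m : ℕ) (l : List ℕ) : Prop :=
  l.Pairwise (· ≤ ·) ∧ ∀ i : Fin l.length, 1 ≤ l.get i ∧ l.get i ≤ m * (i : ℕ) + 1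

/-- `θ(p)` : the nondecreasing rearrangement of the concatenation of `p` with the list of
all `j ∈ {1, …, m*n-m+1}` with `j ≢ 1 (mod m)`. -/
def theta (m n : ℕ) (p : Fin n → ℕ) : List ℕ :=
  Multiset.sort
    ((List.ofFn p : Multiset ℕ) +
      (((List.range (m * n - m + 1)).map (· + 1)).filter
        (fun j => ¬ j ≡ 1 [MOD m]) : List ℕ)) (· ≤ ·)

/-- Parking distributions on the `m`-caterpillar of length `n`, as nondecreasing lists. -/
def PKcat (m n : ℕ) : Set (List ℕ) :=
  {a | a.length = m * n - m + 1 ∧ a.Pairwise (· ≤ ·) ∧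
       (∀ x ∈ a, 1 ≤ x ∧ x ≤ m * n - m + 1) ∧
       (∀ i : ℕ, 1 ≤ i → i ≤ n →
         m * (i - 1) + 1 ≤ (a.filter (fun x => x ≤ m * (i - 1) + 1)).length) ∧
       (∀ j : ℕ, 1 ≤ j → j ≤ m * n - m + 1 → ¬ j ≡ 1 [MOD m] → j ∈ a)}

----------------------------------------------------------------------
-- basic lemmas

lemma mem_PK {m n : ℕ} {p : Fin n → ℕ} :
    p ∈ PK m n ↔ Monotone p ∧ ∀ i : Fin n, 1 ≤ p i ∧ p i ≤ m * i + 1 := by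
  simp [PK, BSeq, boundedSeq_finite, Set.Finite.mem_toFinset, Set.mem_setOf_eq]

section
variable {m n : ℕ} {p : Fin n → ℕ}

lemma pget_eq (k : ℕ) (h1 : 1 ≤ k) (h2 : k ≤ n) : pget p k = p ⟨k - 1, by omega⟩ := by
  rw [pget, dif_pos]

lemma pget_pos (hp : p ∈ PK m n) (k : ℕ) (h1 : 1 ≤ k) (h2 : k ≤ n) : 1 ≤ pget p k := by
  rw [pget_eq k h1 h2]; exact ((mem_PK.1 hp).2 _).1

lemma pget_le (hp : p ∈ PK m n) (k : ℕ) (h1 : 1 ≤ k) (h2 : k ≤ n) :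
    pget p k ≤ m * (k - 1) + 1 := by
  rw [pget_eq k h1 h2]; exact ((mem_PK.1 hp).2 ⟨k-1, by omega⟩).2

lemma pget_mono (hp : p ∈ PK m n) {k k' : ℕ} (h1 : 1 ≤ k) (h2 : k ≤ k') (h3 : k' ≤ n) :
    pget p k ≤ pget p k' := by
  rw [pget_eq k h1 (le_trans h2 h3), pget_eq k' (le_trans h1 h2) h3]
  exact (mem_PK.1 hp).1 (by simp [Fin.mk_le_mk]; omega)

-- the defining set of ffix
lemma ffix_mem (ℓ : ℕ) :
    ffix m p ℓ ∈ ({k | 2 ≤ k ∧ ∃ i : Fin n, (i : ℕ) + 1 = k ∧ m * (k - 2) + 1 + ℓ ≤ p i}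
      ∪ {n + 1} : Set ℕ) :=
  Nat.sInf_mem ⟨n + 1, Set.mem_union_right _ rfl⟩

lemma ffix_le_succ (ℓ : ℕ) : ffix m p ℓ ≤ n + 1 :=
  Nat.sInf_le (Set.mem_union_right _ rfl)

lemma two_le_ffix (hn : 1 ≤ n) (ℓ : ℕ) : 2 ≤ ffix m p ℓ := by
  rcases ffix_mem (m := m) (p := p) ℓ with h | h
  · exact h.1
  · simp only [Set.mem_singleton_iff] at h; omega

lemma ffix_mono {ℓ ℓ' : ℕ} (h : ℓ ≤ ℓ') : ffix m p ℓ ≤ ffix m p ℓ' := by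
  apply Nat.sInf_le
  rcases ffix_mem (m := m) (p := p) ℓ' with hmem | hmem
  · exact Set.mem_union_left _ ⟨hmem.1, hmem.2.imp fun i hi => ⟨hi.1, by omega⟩⟩
  · exact Set.mem_union_right _ hmem

-- if ffix ≤ n then the condition holds at ffix
lemma ffix_spec {ℓ : ℕ} (h : ffix m p ℓ ≤ n) :
    m * (ffix m p ℓ - 2) + 1 + ℓ ≤ pget p (ffix m p ℓ) := by
  rcases ffix_mem (m := m) (p := p) ℓ with hmem | hmem
  · obtain ⟨h2, i, hi, hle⟩ := hmem
    rw [pget_eq _ (by omega) h]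
    have : (⟨ffix m p ℓ - 1, by omega⟩ : Fin n) = i := by
      apply Fin.ext; simp; omega
    rw [this]; exact hle
  · simp only [Set.mem_singleton_iff] at hmem; omega

-- condition fails strictly before ffix
lemma ffix_min {ℓ k : ℕ} (h2 : 2 ≤ k) (hk : k < ffix m p ℓ) (hkn : k ≤ n) :
    pget p k ≤ m * (k - 2) + ℓ := by
  by_contra hcon
  push_neg at hcon
  have : k ∈ ({k | 2 ≤ k ∧ ∃ i : Fin n, (i : ℕ) + 1 = k ∧ m * (k - 2) + 1 + ℓ ≤ p i}
      ∪ {n + 1} : Set ℕ) := by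
    left
    refine ⟨h2, ⟨k - 1, by omega⟩, by simp; omega, ?_⟩
    rw [pget_eq k (by omega) hkn] at hcon
    exact by omega
  have h' : ffix m p ℓ ≤ k := Nat.sInf_le this
  omega

end

section
variable {m n : ℕ} {p : Fin n → ℕ}

lemma ffixE_zero : ffixE m p 0 = 2 := rfl

lemma ffixE_last : ffixE m p (m + 1) = n + 1 := by
  rw [ffixE]; simp

lemma ffixE_mid {ℓ : ℕ} (h1 : 1 ≤ ℓ) (h2 : ℓ ≤ m) : ffixE m p ℓ = ffix m p ℓ := by
  rw [ffixE, if_neg (by omega), if_neg (by omega)]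

lemma two_le_ffixE (hn : 1 ≤ n) (ℓ : ℕ) : 2 ≤ ffixE m p ℓ := by
  rw [ffixE]
  split
  · omega
  · split
    · omega
    · exact two_le_ffix hn _

lemma ffixE_le_succ (hn : 1 ≤ n) (ℓ : ℕ) : ffixE m p ℓ ≤ n + 1 := by
  rw [ffixE]
  split
  · omega
  · split
    · omega
    · exact ffix_le_succ _

lemma ffixE_step (hm : 1 ≤ m) (hn : 1 ≤ n) {ℓ : ℕ} (hℓ : ℓ ≤ m) :
    ffixE m p ℓ ≤ ffixE m p (ℓ + 1) := by
  rcases Nat.eq_zero_or_pos ℓ with h0 | h0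
  · subst h0
    rw [ffixE_zero]
    exact two_le_ffixE hn 1
  · rcases eq_or_lt_of_le hℓ with he | hlt
    · rw [he, ffixE_last, ffixE_mid hm (le_refl m)]
      exact ffix_le_succ _
    · rw [ffixE_mid h0 hℓ, ffixE_mid (by omega) (by omega)]
      exact ffix_mono (by omega)

lemma ffixE_mono (hm : 1 ≤ m) (hn : 1 ≤ n) {ℓ ℓ' : ℕ} (h : ℓ ≤ ℓ') (h' : ℓ' ≤ m + 1) :
    ffixE m p ℓ ≤ ffixE m p ℓ' := by
  induction ℓ' with
  | zero => have : ℓ = 0 := by omega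
            rw [this]
  | succ a ih =>
    rcases Nat.lt_or_ge ℓ (a+1) with hc | hc
    · exact le_trans (ih (by omega) (by omega)) (ffixE_step hm hn (by omega))
    · have : ℓ = a + 1 := by omega
      rw [this]

-- the first element of a nonempty block is exactly at the bound
lemma block_start (hp : p ∈ PK m n) (hm : 1 ≤ m) (hn : 1 ≤ n) {ℓ : ℕ} (hℓ : ℓ ≤ m)
    (hne : ffixE m p ℓ < ffixE m p (ℓ + 1)) :
    pget p (ffixE m p ℓ) = m * (ffixE m p ℓ - 2) + 1 + ℓ := by
  have hle : ffixE m p (ℓ + 1) ≤ n + 1 := ffixE_le_succ hn _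
  have hkn : ffixE m p ℓ ≤ n := by omega
  have h2 : 2 ≤ ffixE m p ℓ := two_le_ffixE hn _
  rcases Nat.eq_zero_or_pos ℓ with h0 | h0
  · subst h0
    have he2 : ffixE m p 0 = 2 := ffixE_zero
    have hne' : 2 < ffix m p 1 := by
      rw [← ffixE_mid (le_refl 1) hm, ← he2]; exact hne
    have hup : pget p 2 ≤ m * (2 - 2) + 1 := ffix_min (le_refl 2) hne' (by omega)
    have hlo : 1 ≤ pget p 2 := pget_pos hp 2 (by omega) (by omega)
    rw [he2]
    omega
  · have hmid : ffixE m p ℓ = ffix m p ℓ := ffixE_mid h0 hℓ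
    rw [hmid] at hkn hne ⊢
    have hlo := ffix_spec (m := m) (p := p) (ℓ := ℓ) hkn
    have hup : pget p (ffix m p ℓ) ≤ m * (ffix m p ℓ - 2) + 1 + ℓ := by
      rcases eq_or_lt_of_le hℓ with he | hlt
      · have hb := pget_le hp (ffix m p ℓ) (by omega) hkn
        have hx : m * (ffix m p ℓ - 1) = m * (ffix m p ℓ - 2) + m := by
          have hy : ffix m p ℓ - 1 = (ffix m p ℓ - 2) + 1 := by omega
          rw [hy, Nat.mul_succ]
        omega
      · rw [ffixE_mid (by omega) (by omega)] at hne
        have h2' : 2 ≤ ffix m p ℓ := by rw [← hmid]; exact h2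
        have := ffix_min (m := m) (p := p) (ℓ := ℓ + 1) h2' hne hkn
        omega
    omega

-- upper bound inside a block
lemma block_upper (hp : p ∈ PK m n) (hm : 1 ≤ m) (hn : 1 ≤ n) {ℓ k : ℕ} (hℓ : ℓ ≤ m)
    (hk1 : ffixE m p ℓ ≤ k) (hk2 : k < ffixE m p (ℓ + 1)) :
    pget p k ≤ m * (k - 2) + 1 + ℓ := by
  have h2 : 2 ≤ k := le_trans (two_le_ffixE hn _) hk1
  have hkn : k ≤ n := by
    have := ffixE_le_succ (m := m) (p := p) hn (ℓ + 1)
    omega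
  rcases eq_or_lt_of_le hℓ with he | hlt
  · have hb := pget_le hp k (by omega) hkn
    have hx : m * (k - 1) = m * (k - 2) + m := by
      have hy : k - 1 = (k - 2) + 1 := by omega
      rw [hy, Nat.mul_succ]
    omega
  · rw [ffixE_mid (by omega) (by omega)] at hk2
    have := ffix_min (m := m) (p := p) (ℓ := ℓ + 1) h2 hk2 hkn
    omega

-- telescoping sum of block lengths
lemma FRD_length (ℓ : ℕ) : (FRD m p ℓ).length = ffixE m p (ℓ + 1) - ffixE m p ℓ := by
  simp [FRD]

lemma sum_FRD_length (hm : 1 ≤ m) (hn : 1 ≤ n) :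
    ∑ i : Fin (m + 1), (FRD m p i).length = n - 1 := by
  have key : ∀ j ≤ m + 1, ∑ i ∈ Finset.range j, (FRD m p i).length
      = ffixE m p j - 2 := by
    intro j hj
    induction j with
    | zero => simp [ffixE_zero]
    | succ a ih =>
      rw [Finset.sum_range_succ, ih (by omega), FRD_length]
      have h1 : 2 ≤ ffixE m p a := two_le_ffixE hn _
      have h2 : ffixE m p a ≤ ffixE m p (a + 1) := ffixE_step hm hn (by omega)
      omega
  have := key (m + 1) (le_refl _)
  rw [ffixE_last] at this
  rw [Fin.sum_univ_eq_sum_range (fun i => (FRD m p i).length) (m + 1), this]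
  omega

end

section
variable {m n : ℕ} {p : Fin n → ℕ}

lemma FRD_get {ℓ : ℕ} (t : Fin (FRD m p ℓ).length) :
    (FRD m p ℓ).get t = pget p (ffixE m p ℓ + t) - (pget p (ffixE m p ℓ) - 1) := by
  rcases t with ⟨t, ht⟩
  simp [FRD] at ht ⊢

lemma FRD_mem_PK (hp : p ∈ PK m n) (hm : 1 ≤ m) (hn : 1 ≤ n) {ℓ : ℕ} (hℓ : ℓ ≤ m) :
    (fun t => (FRD m p ℓ).get t) ∈ PK m (FRD m p ℓ).length := by
  have hlen : (FRD m p ℓ).length = ffixE m p (ℓ + 1) - ffixE m p ℓ := FRD_length ℓ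
  have h2a : 2 ≤ ffixE m p ℓ := two_le_ffixE hn _
  have hbn : ffixE m p (ℓ + 1) ≤ n + 1 := ffixE_le_succ hn _
  rw [mem_PK]
  constructor
  · intro t t' htt'
    show (FRD m p ℓ).get t ≤ (FRD m p ℓ).get t'
    rw [FRD_get, FRD_get]
    have hne : ffixE m p ℓ < ffixE m p (ℓ + 1) := by have := t.isLt; omega
    have hmono : pget p (ffixE m p ℓ + t) ≤ pget p (ffixE m p ℓ + t') := by
      apply pget_mono hp (by omega) (by omega)
      have := t'.isLt; omega
    omega
  · intro t
    have htlt : (t : ℕ) < ffixE m p (ℓ + 1) - ffixE m p ℓ := by have := t.isLt; omega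
    have hne : ffixE m p ℓ < ffixE m p (ℓ + 1) := by omega
    have hstart := block_start hp hm hn hℓ hne
    have hup := block_upper hp hm hn hℓ (k := ffixE m p ℓ + t) (by omega) (by omega)
    have hlo : pget p (ffixE m p ℓ) ≤ pget p (ffixE m p ℓ + t) :=
      pget_mono hp (by omega) (by omega) (by omega)
    have hmul : m * (ffixE m p ℓ + t - 2) = m * (ffixE m p ℓ - 2) + m * t := by
      have h : ffixE m p ℓ + (t:ℕ) - 2 = (ffixE m p ℓ - 2) + t := by omega
      rw [h, Nat.mul_add]
    constructor
    · show 1 ≤ (FRD m p ℓ).get t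
      rw [FRD_get]
      omega
    · show (FRD m p ℓ).get t ≤ m * t + 1
      rw [FRD_get]
      omega

lemma FRD_lengths_mem (hm : 1 ≤ m) (hn : 1 ≤ n) :
    (fun i : Fin (m + 1) => (FRD m p i).length) ∈
      Finset.Nat.antidiagonalTuple (m + 1) (n - 1) := by
  rw [Finset.Nat.mem_antidiagonalTuple]
  exact sum_FRD_length hm hn

end

----------------------------------------------------------------------
-- reconstruction

def Jfun (αe : ℕ → ℕ) (ℓ : ℕ) : ℕ := 2 + ∑ i ∈ Finset.range ℓ, αe i

def blkf (m : ℕ) (αe : ℕ → ℕ) (k : ℕ) : ℕ :=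
  Nat.findGreatest (fun j => Jfun αe j ≤ k) m

def reconV (m : ℕ) (αe : ℕ → ℕ) (ge : ℕ → ℕ → ℕ) (k : ℕ) : ℕ :=
  if k ≤ 1 then 1
  else ge (blkf m αe k) (k - Jfun αe (blkf m αe k))
        + m * (Jfun αe (blkf m αe k) - 2) + blkf m αe k

def alphaE {m : ℕ} (α : Fin (m + 1) → ℕ) : ℕ → ℕ :=
  fun i => if h : i < m + 1 then α ⟨i, h⟩ else 0

def gE {m : ℕ} {α : Fin (m + 1) → ℕ} (g : ∀ i, Fin (α i) → ℕ) : ℕ → ℕ → ℕ :=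
  fun ℓ t => if h : ℓ < m + 1 then (if h2 : t < α ⟨ℓ, h⟩ then g ⟨ℓ, h⟩ ⟨t, h2⟩ else 0) else 0

def recon (m n : ℕ) {α : Fin (m + 1) → ℕ} (g : ∀ i, Fin (α i) → ℕ) : Fin n → ℕ :=
  fun j => reconV m (alphaE α) (gE g) ((j : ℕ) + 1)

section
variable {αe : ℕ → ℕ} {m : ℕ}

lemma Jfun_zero : Jfun αe 0 = 2 := by simp [Jfun]

lemma Jfun_succ (ℓ : ℕ) : Jfun αe (ℓ + 1) = Jfun αe ℓ + αe ℓ := by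
  simp [Jfun, Finset.sum_range_succ]; ring

lemma Jfun_mono : Monotone (Jfun αe) := by
  intro a b hab
  simp only [Jfun]
  exact Nat.add_le_add_left (Finset.sum_le_sum_of_subset (by simp [Finset.range_subset, hab]; intro x hx; omega)) 2

lemma blkf_le (k : ℕ) : blkf m αe k ≤ m := Nat.findGreatest_le m

lemma Jfun_blkf_le {k : ℕ} (hk : 2 ≤ k) : Jfun αe (blkf m αe k) ≤ k :=
  Nat.findGreatest_spec (P := fun j => Jfun αe j ≤ k) (Nat.zero_le m)
    (by show Jfun αe 0 ≤ k; rw [Jfun_zero]; exact hk)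

lemma lt_Jfun_blkf_succ {k : ℕ} (hk : 2 ≤ k) (hJ : k < Jfun αe (m + 1)) :
    k < Jfun αe (blkf m αe k + 1) := by
  rcases eq_or_lt_of_le (blkf_le (αe := αe) k) with he | hlt
  · rw [he]; exact hJ
  · by_contra hcon
    push_neg at hcon
    exact absurd hcon
      (Nat.findGreatest_is_greatest (P := fun j => Jfun αe j ≤ k)
        (Nat.lt_succ_self _) (by omega))

lemma blkf_eq {k ℓ : ℕ} (hℓ : ℓ ≤ m) (h1 : Jfun αe ℓ ≤ k) (h2 : k < Jfun αe (ℓ + 1)) :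
    blkf m αe k = ℓ := by
  have hge : ℓ ≤ blkf m αe k := Nat.le_findGreatest (P := fun j => Jfun αe j ≤ k) hℓ h1
  have h2k : 2 ≤ k := le_trans (by rw [← Jfun_zero (αe := αe)]; exact Jfun_mono (Nat.zero_le ℓ)) h1
  by_contra hne
  have hlt : ℓ < blkf m αe k := by omega
  have hu := Jfun_blkf_le (m := m) (αe := αe) h2k
  have hv : Jfun αe (ℓ + 1) ≤ Jfun αe (blkf m αe k) := Jfun_mono hlt
  omega

lemma reconV_eq {ge : ℕ → ℕ → ℕ} {k ℓ t : ℕ} (hℓ : ℓ ≤ m) (ht : t < αe ℓ)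
    (hk : k = Jfun αe ℓ + t) :
    reconV m αe ge k = ge ℓ t + m * (Jfun αe ℓ - 2) + ℓ := by
  have h2 : 2 ≤ Jfun αe ℓ := by rw [← Jfun_zero (αe := αe)]; exact Jfun_mono (Nat.zero_le ℓ)
  have hb : blkf m αe k = ℓ := blkf_eq hℓ (by omega) (by rw [Jfun_succ]; omega)
  have ht' : k - Jfun αe ℓ = t := by omega
  rw [reconV, if_neg (by omega), hb, ht']

end

section
variable {m n : ℕ} {α : Fin (m + 1) → ℕ} {g : ∀ i, Fin (α i) → ℕ}

lemma alphaE_eq {ℓ : ℕ} (hℓ : ℓ < m + 1) : alphaE α ℓ = α ⟨ℓ, hℓ⟩ := dif_pos hℓ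

lemma gE_eq {ℓ t : ℕ} (hℓ : ℓ < m + 1) (h2 : t < α ⟨ℓ, hℓ⟩) :
    gE g ℓ t = g ⟨ℓ, hℓ⟩ ⟨t, h2⟩ := by rw [gE]; rw [dif_pos hℓ, dif_pos h2]

lemma gE_apply {t : ℕ} (i : Fin (m + 1)) (h2 : t < α i) :
    gE g (i : ℕ) t = g i ⟨t, h2⟩ := by
  rw [gE]
  rw [dif_pos i.isLt, dif_pos (show t < α ⟨(i : ℕ), i.isLt⟩ from h2)]

lemma gE_pos (hg : ∀ i, g i ∈ PK m (α i)) {ℓ t : ℕ} (hℓ : ℓ < m + 1)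
    (h2 : t < alphaE α ℓ) : 1 ≤ gE g ℓ t := by
  rw [alphaE_eq hℓ] at h2
  rw [gE_eq hℓ h2]
  exact ((mem_PK.1 (hg _)).2 _).1

lemma gE_le (hg : ∀ i, g i ∈ PK m (α i)) {ℓ t : ℕ} (hℓ : ℓ < m + 1)
    (h2 : t < alphaE α ℓ) : gE g ℓ t ≤ m * t + 1 := by
  rw [alphaE_eq hℓ] at h2
  rw [gE_eq hℓ h2]
  exact ((mem_PK.1 (hg _)).2 _).2

lemma gE_mono (hg : ∀ i, g i ∈ PK m (α i)) {ℓ t t' : ℕ} (hℓ : ℓ < m + 1)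
    (htt' : t ≤ t') (h2 : t' < alphaE α ℓ) : gE g ℓ t ≤ gE g ℓ t' := by
  rw [alphaE_eq hℓ] at h2
  rw [gE_eq hℓ (by omega), gE_eq hℓ h2]
  exact (mem_PK.1 (hg _)).1 (by simp [Fin.mk_le_mk]; omega)

lemma gE_zero (hg : ∀ i, g i ∈ PK m (α i)) {ℓ : ℕ} (hℓ : ℓ < m + 1)
    (h0 : 0 < alphaE α ℓ) : gE g ℓ 0 = 1 := by
  have h1 := gE_pos hg hℓ h0
  have h2 := gE_le hg hℓ h0
  omega

lemma Jfun_last (hn : 1 ≤ n) (hsum : ∑ i, α i = n - 1) :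
    Jfun (alphaE α) (m + 1) = n + 1 := by
  have : ∑ i ∈ Finset.range (m + 1), alphaE α i = ∑ i : Fin (m + 1), α i := by
    rw [← Fin.sum_univ_eq_sum_range]
    exact Finset.sum_congr rfl fun i _ => by rw [alphaE_eq i.isLt]
  rw [Jfun, this, hsum]
  omega

/-- block data at position `k` -/
lemma blk_data (hn : 1 ≤ n) (hsum : ∑ i, α i = n - 1) {k : ℕ} (h1 : 2 ≤ k) (h2 : k ≤ n) :
    Jfun (alphaE α) (blkf m (alphaE α) k) ≤ k ∧
    k < Jfun (alphaE α) (blkf m (alphaE α) k + 1) ∧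
    k - Jfun (alphaE α) (blkf m (alphaE α) k) < alphaE α (blkf m (alphaE α) k) := by
  have hlast : Jfun (alphaE α) (m + 1) = n + 1 := Jfun_last hn hsum
  have hA : Jfun (alphaE α) (blkf m (alphaE α) k) ≤ k := Jfun_blkf_le h1
  have hB : k < Jfun (alphaE α) (blkf m (alphaE α) k + 1) :=
    lt_Jfun_blkf_succ h1 (by omega)
  refine ⟨hA, hB, ?_⟩
  have := Jfun_succ (αe := alphaE α) (blkf m (alphaE α) k)
  omega

lemma reconV_eq_of (hn : 1 ≤ n) (hsum : ∑ i, α i = n - 1) {k : ℕ} (h1 : 2 ≤ k) (h2 : k ≤ n) :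
    reconV m (alphaE α) (gE g) k =
      gE g (blkf m (alphaE α) k) (k - Jfun (alphaE α) (blkf m (alphaE α) k))
        + m * (Jfun (alphaE α) (blkf m (alphaE α) k) - 2) + blkf m (alphaE α) k := by
  rw [reconV, if_neg (by omega)]

lemma two_le_Jfun (ℓ : ℕ) : 2 ≤ Jfun (alphaE α) ℓ := by
  rw [Jfun]; omega

lemma reconV_bounds (hn : 1 ≤ n) (hsum : ∑ i, α i = n - 1) (hg : ∀ i, g i ∈ PK m (α i))
    {k : ℕ} (h1 : 2 ≤ k) (h2 : k ≤ n) :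
    1 ≤ reconV m (alphaE α) (gE g) k ∧
    reconV m (alphaE α) (gE g) k ≤ m * (k - 2) + 1 + blkf m (alphaE α) k := by
  obtain ⟨hA, hB, hC⟩ := blk_data hn hsum h1 h2
  rw [reconV_eq_of hn hsum h1 h2]
  have hbm := blkf_le (m := m) (αe := alphaE α) k
  have hpos := gE_pos (g := g) hg (Nat.lt_succ_of_le hbm) hC
  have hle := gE_le (g := g) hg (Nat.lt_succ_of_le hbm) hC
  have h2J : 2 ≤ Jfun (alphaE α) (blkf m (alphaE α) k) := two_le_Jfun _
  have hmul : m * (k - 2) = m * (Jfun (alphaE α) (blkf m (alphaE α) k) - 2)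
      + m * (k - Jfun (alphaE α) (blkf m (alphaE α) k)) := by
    rw [← Nat.mul_add]
    congr 1
    omega
  omega

end

section
variable {m n : ℕ} {α : Fin (m + 1) → ℕ} {g : ∀ i, Fin (α i) → ℕ}

lemma reconV_step (hn : 1 ≤ n) (hsum : ∑ i, α i = n - 1) (hg : ∀ i, g i ∈ PK m (α i))
    {k : ℕ} (h1 : 1 ≤ k) (h2 : k + 1 ≤ n) :
    reconV m (alphaE α) (gE g) k ≤ reconV m (alphaE α) (gE g) (k + 1) := by
  rcases Nat.lt_or_ge k 2 with hk2 | hk2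
  · have hk1 : k = 1 := by omega
    rw [hk1]
    rw [show reconV m (alphaE α) (gE g) 1 = 1 from if_pos (le_refl 1)]
    exact (reconV_bounds hn hsum hg (by omega) (by omega)).1
  · obtain ⟨hA, hB, hC⟩ := blk_data hn hsum hk2 (by omega)
    obtain ⟨hA', hB', hC'⟩ := blk_data hn hsum (k := k + 1) (by omega) h2
    have hbm := blkf_le (m := m) (αe := alphaE α) k
    have hbm' := blkf_le (m := m) (αe := alphaE α) (k + 1)
    have hble : blkf m (alphaE α) k ≤ blkf m (alphaE α) (k + 1) :=
      Nat.le_findGreatest (P := fun j => Jfun (alphaE α) j ≤ k + 1) hbm (by omega)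
    rw [reconV_eq_of hn hsum hk2 (by omega), reconV_eq_of hn hsum (by omega) h2]
    rcases eq_or_lt_of_le hble with he | hlt
    · -- same block
      rw [← he]
      have hmono := gE_mono (g := g) hg (Nat.lt_succ_of_le hbm)
        (t := k - Jfun (alphaE α) (blkf m (alphaE α) k))
        (t' := k + 1 - Jfun (alphaE α) (blkf m (alphaE α) k)) (by omega) (by rw [← he] at hC'; omega)
      omega
    · -- new block starts at k+1
      have hJle : Jfun (alphaE α) (blkf m (alphaE α) k + 1)
          ≤ Jfun (alphaE α) (blkf m (alphaE α) (k + 1)) := Jfun_mono hlt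
      have hJeq : Jfun (alphaE α) (blkf m (alphaE α) (k + 1)) = k + 1 := by omega
      have hle := gE_le (g := g) hg (Nat.lt_succ_of_le hbm) hC
      have hpos' := gE_pos (g := g) hg (Nat.lt_succ_of_le hbm') hC'
      have h2J : 2 ≤ Jfun (alphaE α) (blkf m (alphaE α) k) := two_le_Jfun _
      have hmul : m * (k - 2) = m * (Jfun (alphaE α) (blkf m (alphaE α) k) - 2)
          + m * (k - Jfun (alphaE α) (blkf m (alphaE α) k)) := by
        rw [← Nat.mul_add]; congr 1; omega
      have hmul2 : m * (k - 1) = m * (k + 1 - 2) := by congr 1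
      have hmul4 : m * (Jfun (alphaE α) (blkf m (alphaE α) (k + 1)) - 2) = m * (k - 1) := by
        rw [hJeq]
        exact hmul2.symm
      have hmul3 : m * (k - 2) ≤ m * (k - 1) := Nat.mul_le_mul_left m (by omega)
      omega

lemma recon_mem_PK (hn : 1 ≤ n) (hsum : ∑ i, α i = n - 1) (hg : ∀ i, g i ∈ PK m (α i)) :
    recon m n g ∈ PK m n := by
  rw [mem_PK]
  constructor
  · -- monotone
    have key : ∀ d k : ℕ, 1 ≤ k → k + d ≤ n →
        reconV m (alphaE α) (gE g) k ≤ reconV m (alphaE α) (gE g) (k + d) := by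
      intro d
      induction d with
      | zero => intro k _ _; exact le_refl _
      | succ d ih =>
        intro k hk hkd
        calc reconV m (alphaE α) (gE g) k ≤ reconV m (alphaE α) (gE g) (k + d) :=
              ih k hk (by omega)
          _ ≤ reconV m (alphaE α) (gE g) (k + d + 1) :=
              reconV_step hn hsum hg (by omega) (by omega)
    intro j j' hjj'
    have := key ((j' : ℕ) - j) ((j : ℕ) + 1) (by omega) (by have := j'.isLt; omega)
    rw [show (j : ℕ) + 1 + ((j' : ℕ) - (j : ℕ)) = (j' : ℕ) + 1 by
      have : (j : ℕ) ≤ j' := hjj'; omega] at this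
    exact this
  · intro j
    rcases Nat.eq_zero_or_pos (j : ℕ) with h0 | h0
    · have : recon m n g j = 1 := by
        rw [recon, h0]
        exact if_pos (le_refl 1)
      rw [this]
      omega
    · have h1 : 2 ≤ (j : ℕ) + 1 := by omega
      have h2 : (j : ℕ) + 1 ≤ n := j.isLt
      have hb := reconV_bounds (g := g) hn hsum hg h1 h2
      have hu := (reconV_bounds (g := g) hn hsum hg h1 h2).2
      have hbm := blkf_le (m := m) (αe := alphaE α) ((j : ℕ) + 1)
      have hmul : m * ((j : ℕ) + 1 - 2) + m = m * (j : ℕ) := by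
        rw [← Nat.mul_succ]; congr 1; omega
      constructor
      · exact hb.1
      · show reconV m (alphaE α) (gE g) ((j : ℕ) + 1) ≤ m * (j : ℕ) + 1
        omega

end

section
variable {m n : ℕ} {α : Fin (m + 1) → ℕ} {g : ∀ i, Fin (α i) → ℕ}

lemma ffix_recon (hn : 1 ≤ n) (hsum : ∑ i, α i = n - 1) (hg : ∀ i, g i ∈ PK m (α i))
    {ℓ : ℕ} (h1 : 1 ≤ ℓ) (h2 : ℓ ≤ m) :
    ffix m (recon m n g) ℓ = Jfun (alphaE α) ℓ := by
  have hlast : Jfun (alphaE α) (m + 1) = n + 1 := Jfun_last hn hsum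
  have hJle : Jfun (alphaE α) ℓ ≤ n + 1 := by
    have := Jfun_mono (αe := alphaE α) (show ℓ ≤ m + 1 by omega)
    omega
  have h2J : 2 ≤ Jfun (alphaE α) ℓ := two_le_Jfun _
  -- claim A : no position before `Jfun ℓ` satisfies the condition
  have claimA : ∀ a, a < Jfun (alphaE α) ℓ →
      a ∉ ({k | 2 ≤ k ∧ ∃ i : Fin n, (i : ℕ) + 1 = k ∧
        m * (k - 2) + 1 + ℓ ≤ recon m n g i} ∪ {n + 1} : Set ℕ) := by
    intro a ha hmem
    rcases hmem with ⟨h2a, i, hi, hcond⟩ | hmem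
    · have han : a ≤ n := by have := i.isLt; omega
      obtain ⟨hA, hB, hC⟩ := blk_data (α := α) hn hsum h2a han
      have hblt : blkf m (alphaE α) a < ℓ := by
        by_contra hcon
        push_neg at hcon
        have := Jfun_mono (αe := alphaE α) hcon
        omega
      have hrv : recon m n g i = reconV m (alphaE α) (gE g) a := by
        rw [recon]; congr 1 <;> simp <;> omega
      have hub := (reconV_bounds (g := g) hn hsum hg h2a han).2
      rw [hrv] at hcond
      omega
    · simp only [Set.mem_singleton_iff] at hmem
      omega
  -- claim B : `Jfun ℓ` is in the defining set
  have claimB : Jfun (alphaE α) ℓ ∈ ({k | 2 ≤ k ∧ ∃ i : Fin n, (i : ℕ) + 1 = k ∧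
      m * (k - 2) + 1 + ℓ ≤ recon m n g i} ∪ {n + 1} : Set ℕ) := by
    rcases eq_or_lt_of_le hJle with he | hlt
    · right; exact he
    · left
      have hJn : Jfun (alphaE α) ℓ ≤ n := by omega
      refine ⟨h2J, ⟨Jfun (alphaE α) ℓ - 1, by omega⟩,
        (by show Jfun (alphaE α) ℓ - 1 + 1 = Jfun (alphaE α) ℓ; omega), ?_⟩
      obtain ⟨hA, hB, hC⟩ := blk_data (α := α) hn hsum h2J hJn
      have hbge : ℓ ≤ blkf m (alphaE α) (Jfun (alphaE α) ℓ) :=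
        Nat.le_findGreatest (P := fun j => Jfun (alphaE α) j ≤ Jfun (alphaE α) ℓ) h2 (le_refl _)
      have hJeq : Jfun (alphaE α) (blkf m (alphaE α) (Jfun (alphaE α) ℓ)) =
          Jfun (alphaE α) ℓ := le_antisymm hA (Jfun_mono hbge)
      have hrv : recon m n g ⟨Jfun (alphaE α) ℓ - 1, by omega⟩ =
          reconV m (alphaE α) (gE g) (Jfun (alphaE α) ℓ) := by
        rw [recon]; congr 1 <;> simp <;> omega
      rw [hrv, reconV_eq_of hn hsum h2J hJn]
      have hbm := blkf_le (m := m) (αe := alphaE α) (Jfun (alphaE α) ℓ)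
      have hpos := gE_pos (g := g) hg (Nat.lt_succ_of_le hbm) hC
      have hmm : m * (Jfun (alphaE α) (blkf m (alphaE α) (Jfun (alphaE α) ℓ)) - 2) =
          m * (Jfun (alphaE α) ℓ - 2) := by rw [hJeq]
      omega
  apply le_antisymm (Nat.sInf_le claimB)
  by_contra hcon
  push_neg at hcon
  have hmem := Nat.sInf_mem (s := {k | 2 ≤ k ∧ ∃ i : Fin n, (i : ℕ) + 1 = k ∧
      m * (k - 2) + 1 + ℓ ≤ recon m n g i} ∪ {n + 1}) ⟨n + 1, Set.mem_union_right _ rfl⟩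
  exact claimA _ hcon hmem

lemma ffixE_recon (hm : 1 ≤ m) (hn : 1 ≤ n) (hsum : ∑ i, α i = n - 1)
    (hg : ∀ i, g i ∈ PK m (α i)) {ℓ : ℕ} (hℓ : ℓ ≤ m + 1) :
    ffixE m (recon m n g) ℓ = Jfun (alphaE α) ℓ := by
  rcases Nat.eq_zero_or_pos ℓ with h0 | h0
  · subst h0; rw [ffixE_zero, Jfun_zero]
  · rcases eq_or_lt_of_le hℓ with he | hlt
    · rw [he, ffixE_last, Jfun_last hn hsum]
    · rw [ffixE_mid h0 (by omega), ffix_recon hn hsum hg h0 (by omega)]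

lemma FRD_recon_length (hm : 1 ≤ m) (hn : 1 ≤ n) (hsum : ∑ i, α i = n - 1)
    (hg : ∀ i, g i ∈ PK m (α i)) (i : Fin (m + 1)) :
    (FRD m (recon m n g) (i : ℕ)).length = α i := by
  rw [FRD_length, ffixE_recon hm hn hsum hg (by omega),
    ffixE_recon hm hn hsum hg (by have := i.isLt; omega), Jfun_succ,
    alphaE_eq i.isLt]
  simp

lemma FRD_recon_get (hm : 1 ≤ m) (hn : 1 ≤ n) (hsum : ∑ i, α i = n - 1)
    (hg : ∀ i, g i ∈ PK m (α i)) (i : Fin (m + 1))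
    (t : Fin (FRD m (recon m n g) (i : ℕ)).length) :
    (FRD m (recon m n g) (i : ℕ)).get t = g i ⟨t, by
      rw [← FRD_recon_length hm hn hsum hg i]; exact t.isLt⟩ := by
  have hlen := FRD_recon_length hm hn hsum hg i
  have htα : (t : ℕ) < α i := by rw [← hlen]; exact t.isLt
  have hlast : Jfun (alphaE α) (m + 1) = n + 1 := Jfun_last hn hsum
  have hE0 : ffixE m (recon m n g) (i : ℕ) = Jfun (alphaE α) i :=
    ffixE_recon hm hn hsum hg (by omega)
  have h2J : 2 ≤ Jfun (alphaE α) (i : ℕ) := two_le_Jfun _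
  have htαe : (t : ℕ) < alphaE α (i : ℕ) := by rw [alphaE_eq i.isLt]; simpa using htα
  have hJsn : Jfun (alphaE α) ((i : ℕ) + 1) ≤ n + 1 := by
    have := Jfun_mono (αe := alphaE α) (show (i : ℕ) + 1 ≤ m + 1 by have := i.isLt; omega)
    omega
  have hJts : Jfun (alphaE α) (i : ℕ) + (t : ℕ) < Jfun (alphaE α) ((i : ℕ) + 1) := by
    rw [Jfun_succ]; omega
  have hkn : Jfun (alphaE α) (i : ℕ) + (t : ℕ) ≤ n := by omega
  -- the two pget values
  have hpg : ∀ s : ℕ, s < alphaE α (i : ℕ) →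
      pget (recon m n g) (Jfun (alphaE α) (i : ℕ) + s) =
        gE g (i : ℕ) s + m * (Jfun (alphaE α) (i : ℕ) - 2) + (i : ℕ) := by
    intro s hs
    have hksn : Jfun (alphaE α) (i : ℕ) + s ≤ n := by
      have : Jfun (alphaE α) (i : ℕ) + s < Jfun (alphaE α) ((i : ℕ) + 1) := by
        rw [Jfun_succ]; omega
      omega
    rw [pget_eq _ (by omega) hksn]
    have hrv : recon m n g ⟨Jfun (alphaE α) (i : ℕ) + s - 1, by omega⟩ =
        reconV m (alphaE α) (gE g) (Jfun (alphaE α) (i : ℕ) + s) := by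
      rw [recon]; congr 1 <;> simp <;> omega
    rw [hrv, reconV_eq (by omega) hs rfl]
  have h0 := hpg 0 (by omega)
  rw [Nat.add_zero] at h0
  rw [FRD_get, hE0, hpg _ htαe, h0]
  rw [gE_zero hg i.isLt (by omega)]
  have harith : gE g (i : ℕ) (t : ℕ) + m * (Jfun (alphaE α) (i : ℕ) - 2) + (i : ℕ)
      - (1 + m * (Jfun (alphaE α) (i : ℕ) - 2) + (i : ℕ) - 1) = gE g (i : ℕ) (t : ℕ) := by
    omega
  rw [harith, gE_apply i htα]

end

section
variable {m n : ℕ} {p : Fin n → ℕ}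

lemma pget_succ (j : Fin n) : pget p ((j : ℕ) + 1) = p j := by
  rw [pget, dif_pos (by simpa using j.isLt)]
  congr

lemma sum_FRD_prefix (hm : 1 ≤ m) (hn : 1 ≤ n) {j : ℕ} (hj : j ≤ m + 1) :
    ∑ i ∈ Finset.range j, (FRD m p i).length = ffixE m p j - 2 := by
  induction j with
  | zero => simp [ffixE_zero]
  | succ a ih =>
    rw [Finset.sum_range_succ, ih (by omega), FRD_length]
    have h1 : 2 ≤ ffixE m p a := two_le_ffixE hn _
    have h2 : ffixE m p a ≤ ffixE m p (a + 1) := ffixE_step hm hn (by omega)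
    omega

lemma Jfun_FRD (hm : 1 ≤ m) (hn : 1 ≤ n) {ℓ : ℕ} (hℓ : ℓ ≤ m + 1) :
    Jfun (alphaE (fun i : Fin (m + 1) => (FRD m p (i : ℕ)).length)) ℓ = ffixE m p ℓ := by
  have hpre := sum_FRD_prefix (p := p) hm hn hℓ
  have h2 : 2 ≤ ffixE m p ℓ := two_le_ffixE hn _
  rw [Jfun]
  have : ∑ i ∈ Finset.range ℓ, alphaE (fun i : Fin (m + 1) => (FRD m p (i : ℕ)).length) i
      = ∑ i ∈ Finset.range ℓ, (FRD m p i).length := by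
    apply Finset.sum_congr rfl
    intro i hi
    rw [Finset.mem_range] at hi
    rw [alphaE_eq (show i < m + 1 by omega)]
  rw [this, hpre]
  omega

lemma recon_FRD (hp : p ∈ PK m n) (hm : 1 ≤ m) (hn : 1 ≤ n) :
    recon m n (α := fun i : Fin (m + 1) => (FRD m p (i : ℕ)).length)
      (fun i t => (FRD m p (i : ℕ)).get t) = p := by
  set α : Fin (m + 1) → ℕ := fun i => (FRD m p (i : ℕ)).length with hα
  set g : ∀ i, Fin (α i) → ℕ := fun i t => (FRD m p (i : ℕ)).get t with hgdef
  have hsum : ∑ i, α i = n - 1 := sum_FRD_length hm hn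
  have hg : ∀ i, g i ∈ PK m (α i) := fun i => FRD_mem_PK hp hm hn (by have := i.isLt; omega)
  funext j
  rcases Nat.eq_zero_or_pos (j : ℕ) with h0 | h0
  · have h1 : recon m n g j = 1 := by rw [recon, h0]; exact if_pos (le_refl 1)
    have h2 := (mem_PK.1 hp).2 j
    rw [h0] at h2
    simp at h2
    omega
  · have h1 : 2 ≤ (j : ℕ) + 1 := by omega
    have h2 : (j : ℕ) + 1 ≤ n := j.isLt
    obtain ⟨hA, hB, hC⟩ := blk_data (α := α) hn hsum h1 h2
    set k := (j : ℕ) + 1 with hk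
    set b := blkf m (alphaE α) k with hbdef
    have hbm : b ≤ m := blkf_le k
    have hJb : Jfun (alphaE α) b = ffixE m p b := Jfun_FRD hm hn (by omega)
    have hJb1 : Jfun (alphaE α) (b + 1) = ffixE m p (b + 1) := Jfun_FRD hm hn (by omega)
    have hne : ffixE m p b < ffixE m p (b + 1) := by omega
    have hstart := block_start hp hm hn hbm hne
    have hrv : recon m n g j = reconV m (alphaE α) (gE g) k := by
      rw [recon]
    rw [hrv, reconV_eq_of hn hsum h1 h2]
    -- evaluate gE
    have htlen : k - Jfun (alphaE α) b < α ⟨b, by omega⟩ := by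
      have := alphaE_eq (α := α) (show b < m + 1 by omega)
      omega
    have hgE : gE g b (k - Jfun (alphaE α) b) = g ⟨b, by omega⟩ ⟨k - Jfun (alphaE α) b, htlen⟩ :=
      gE_eq (by omega) htlen
    rw [hgE]
    have hget : g ⟨b, by omega⟩ ⟨k - Jfun (alphaE α) b, htlen⟩ =
        pget p (ffixE m p b + (k - Jfun (alphaE α) b)) - (pget p (ffixE m p b) - 1) := by
      rw [hgdef]
      exact FRD_get _
    rw [hget]
    have hsum2 : ffixE m p b + (k - Jfun (alphaE α) b) = k := by omega
    rw [hsum2]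
    have hmono : pget p (ffixE m p b) ≤ pget p k :=
      pget_mono hp (by have := two_le_ffixE (m := m) (p := p) hn b; omega) (by omega) h2
    have hpj : pget p k = p j := pget_succ j
    rw [hstart] at hmono ⊢
    rw [← hpj, hJb]
    omega

end

----------------------------------------------------------------------
-- counting layer

lemma Cnt_eq_zero {m a k : ℕ} (h : a < k) : Cnt m a k = 0 := by
  rw [Cnt, Finset.card_eq_zero, Finset.filter_eq_empty_iff]
  intro p _
  have : luck m p ≤ a := le_trans (Finset.card_filter_le _ _) (by simp)
  omega

lemma sum_pow_eq {R : Type*} [CommSemiring R] (q : R) {m a : ℕ} (Sf : (Fin a → ℕ) → ℕ)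
    (hd : ∀ k, ((PK m a).filter (fun p => Sf p = k)).card = Cnt m a k) :
    ∑ p ∈ PK m a, q ^ Sf p = ∑ k ∈ Finset.range (a + 1), (Cnt m a k : R) * q ^ k := by
  have hmaps : ∀ p ∈ PK m a, Sf p ∈ Finset.range (a + 1) := by
    intro p hp
    rw [Finset.mem_range]
    by_contra hcon
    have h0 : Cnt m a (Sf p) = 0 := Cnt_eq_zero (by omega)
    have h1 := hd (Sf p)
    have h2 : p ∈ (PK m a).filter (fun p' => Sf p' = Sf p) := by
      rw [Finset.mem_filter]; exact ⟨hp, rfl⟩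
    have h3 := Finset.card_pos.2 ⟨p, h2⟩
    omega
  rw [← Finset.sum_fiberwise_of_maps_to hmaps (fun p => q ^ Sf p)]
  apply Finset.sum_congr rfl
  intro k _
  have : ∀ p ∈ (PK m a).filter (fun p => Sf p = k), q ^ Sf p = q ^ k := by
    intro p hp
    rw [(Finset.mem_filter.1 hp).2]
  rw [Finset.sum_congr rfl this, Finset.sum_const, hd k, nsmul_eq_mul]

lemma aeval_Rpoly {R : Type*} [CommRing R] (q : R) (m a : ℕ) :
    Polynomial.aeval q (Rpoly m a) = ∑ k ∈ Finset.range (a + 1), (Cnt m a k : R) * q ^ k := by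
  rw [Rpoly, map_sum]
  apply Finset.sum_congr rfl
  intro k _
  rw [map_mul, map_pow, Polynomial.aeval_X, map_natCast]

theorem stmt15 (m : ℕ) (hm : 1 ≤ m)
    (S : Fin (m + 1) → (n : ℕ) → (Fin n → ℕ) → ℕ) (c : Fin (m + 1) → ℕ)
    (hdist : ∀ (i : Fin (m + 1)) (n k : ℕ),
      ((PK m n).filter (fun p => S i n p = k)).card = Cnt m n k)
    (hrec : ∀ (i : Fin (m + 1)) (n : ℕ), 1 ≤ n → ∀ p ∈ PK m n,
      S i n p = S i (FRD m p (i : ℕ)).length (fun t => (FRD m p (i : ℕ)).get t) + c i)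
    (n : ℕ) (hn : 1 ≤ n) :
    ∑ p ∈ PK m n,
        ∏ i : Fin (m + 1), (MvPolynomial.X i : MvPolynomial (Fin (m + 1)) ℤ) ^ S i n p =
      (∏ i : Fin (m + 1), (MvPolynomial.X i : MvPolynomial (Fin (m + 1)) ℤ) ^ c i) *
        ∑ α ∈ Finset.Nat.antidiagonalTuple (m + 1) (n - 1),
          ∏ i : Fin (m + 1),
            Polynomial.aeval (MvPolynomial.X i : MvPolynomial (Fin (m + 1)) ℤ) (Rpoly m (α i)) := by
  classical
  -- the common target summand
  set F : (Σ α : Fin (m + 1) → ℕ, ∀ i, Fin (α i) → ℕ) → MvPolynomial (Fin (m + 1)) ℤ :=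
    fun x => ∏ i : Fin (m + 1), (MvPolynomial.X i : MvPolynomial (Fin (m + 1)) ℤ) ^ S i (x.1 i) (x.2 i)
    with hF
  -- Step 1 : rewrite the left-hand side using `hrec`
  have step1 : ∑ p ∈ PK m n,
      ∏ i : Fin (m + 1), (MvPolynomial.X i : MvPolynomial (Fin (m + 1)) ℤ) ^ S i n p =
    (∏ i : Fin (m + 1), (MvPolynomial.X i : MvPolynomial (Fin (m + 1)) ℤ) ^ c i) *
      ∑ p ∈ PK m n, F ⟨fun i => (FRD m p (i : ℕ)).length,
        fun i t => (FRD m p (i : ℕ)).get t⟩ := by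
    rw [Finset.mul_sum]
    apply Finset.sum_congr rfl
    intro p hp
    calc ∏ i : Fin (m + 1), (MvPolynomial.X i : MvPolynomial (Fin (m + 1)) ℤ) ^ S i n p
        = ∏ i : Fin (m + 1), ((MvPolynomial.X i : MvPolynomial (Fin (m + 1)) ℤ) ^ c i *
            (MvPolynomial.X i) ^ S i (FRD m p (i : ℕ)).length
              (fun t => (FRD m p (i : ℕ)).get t)) := by
          apply Finset.prod_congr rfl
          intro i _
          rw [hrec i n hn p hp, pow_add, mul_comm]
      _ = _ := by
          rw [Finset.prod_mul_distrib]
  rw [step1]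
  congr 1
  -- Step 2 : rewrite each aeval (Rpoly) factor as a sum over PK
  have step2 : ∀ (α : Fin (m + 1) → ℕ) (i : Fin (m + 1)),
      Polynomial.aeval (MvPolynomial.X i : MvPolynomial (Fin (m + 1)) ℤ) (Rpoly m (α i))
        = ∑ p ∈ PK m (α i), (MvPolynomial.X i : MvPolynomial (Fin (m + 1)) ℤ) ^ S i (α i) p := by
    intro α i
    refine (aeval_Rpoly (MvPolynomial.X i) m (α i)).trans ?_
    rw [← sum_pow_eq (MvPolynomial.X i) (S i (α i)) (fun k => hdist i (α i) k)]
  -- Step 3 : expand the product of sums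
  have step3 : ∑ α ∈ Finset.Nat.antidiagonalTuple (m + 1) (n - 1),
      ∏ i : Fin (m + 1),
        Polynomial.aeval (MvPolynomial.X i : MvPolynomial (Fin (m + 1)) ℤ) (Rpoly m (α i))
    = ∑ x ∈ (Finset.Nat.antidiagonalTuple (m + 1) (n - 1)).sigma
        (fun α => Fintype.piFinset (fun i => PK m (α i))), F x := by
    rw [Finset.sum_sigma]
    apply Finset.sum_congr rfl
    intro α hα
    rw [Finset.prod_congr rfl (fun i _ => step2 α i), Finset.prod_univ_sum]
  rw [step3]
  -- Step 4 : the first-return bijection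
  apply Finset.sum_nbij' (i := fun p => (⟨fun i => (FRD m p (i : ℕ)).length,
      fun i t => (FRD m p (i : ℕ)).get t⟩ : Σ α : Fin (m + 1) → ℕ, ∀ i, Fin (α i) → ℕ))
    (j := fun x => recon m n x.2)
  · -- maps to
    intro p hp
    rw [Finset.mem_sigma]
    constructor
    · exact FRD_lengths_mem hm hn
    · rw [Fintype.mem_piFinset]
      intro i
      exact FRD_mem_PK hp hm hn (by have := i.isLt; omega)
  · intro x hx
    rw [Finset.mem_sigma] at hx
    obtain ⟨hx1, hx2⟩ := hx
    rw [Finset.Nat.mem_antidiagonalTuple] at hx1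
    rw [Fintype.mem_piFinset] at hx2
    exact recon_mem_PK hn hx1 hx2
  · -- left inverse : recon ∘ decomp = id on PK
    intro p hp
    exact recon_FRD hp hm hn
  · -- right inverse : decomp ∘ recon = id on the sigma set
    rintro ⟨α, g⟩ hx
    rw [Finset.mem_sigma] at hx
    obtain ⟨hx1, hx2⟩ := hx
    rw [Finset.Nat.mem_antidiagonalTuple] at hx1
    rw [Fintype.mem_piFinset] at hx2
    have hlen : (fun i : Fin (m + 1) => (FRD m (recon m n g) (i : ℕ)).length) = α :=
      funext (fun i => FRD_recon_length hm hn hx1 hx2 i)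
    have key : ∀ (β : Fin (m + 1) → ℕ) (hβ : β = α) (G : ∀ i, Fin (β i) → ℕ),
        (∀ (i : Fin (m + 1)) (t : Fin (β i)), G i t = g i (Fin.cast (congrFun hβ i) t)) →
        (⟨β, G⟩ : Σ α : Fin (m + 1) → ℕ, ∀ i, Fin (α i) → ℕ) = ⟨α, g⟩ := by
      rintro β rfl G hG
      have hGg : G = g := funext fun i => funext fun t => hG i t
      rw [hGg]
    exact key _ hlen _ (fun i t => FRD_recon_get hm hn hx1 hx2 i t)
  · -- summands agree
    intro p hp
    rfl

end
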